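/- Let Q* be a fixed point of the Bellman operator F, let π* be a greedy policy with respect to Q*, let ε > 0 satisfy γ + ε < 1, let w ∈ ℝ^{S×A} be entrywise strictly positive, and let v = Σ_{i=0}^∞ (γ+ε)^{−i} (A_{π*}ᵀ)ⁱ w. Then for every Q ∈ ℝ^{S×A} with Q ≤ Q* entrywise, (γ+ε) · vᵀ(Q − Q*) ≤ vᵀ(F Q − Q*) ≤ 0. -/

import Mathlib

open Finset Matrix

/-- The Bellman operator `F` for a discounted MDP:
`(F Q)(s,a) = R(s,a) + γ * Σ_{s'} P(s'|s,a) * max_{a'} Q(s',a')`. -/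
noncomputable def bellman {S A : Type*} [Fintype S] [Fintype A] [Nonempty A]
    (γ : ℝ) (P : S → A → S → ℝ) (R : S → A → ℝ) (Q : S × A → ℝ) : S × A → ℝ :=
  fun p =>
    R p.1 p.2 +
      γ * ∑ s' : S, P p.1 p.2 s' * Finset.univ.sup' Finset.univ_nonempty (fun a' => Q (s', a'))

/-- The matrix of the linear map `A_π` on `ℝ^{S×A}` associated with a deterministic
policy `π : S → A`: `(A_π x)(s,a) = γ * Σ_{s'} P(s'|s,a) * x(s', π(s'))`.
Its entry at row `(s,a)`, column `(s',a')` is `γ * P(s'|s,a)` if `a' = π s'`, else `0`. -/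
noncomputable def polMat {S A : Type*} [Fintype S] [Fintype A] [DecidableEq A]
    (γ : ℝ) (P : S → A → S → ℝ) (π : S → A) : Matrix (S × A) (S × A) ℝ :=
  Matrix.of fun p q => if q.2 = π q.1 then γ * P p.1 p.2 q.1 else 0

set_option linter.unusedSectionVars false

section aux
variable {S A : Type*} [Fintype S] [Fintype A] [Nonempty S] [Nonempty A]
    [DecidableEq S] [DecidableEq A]

lemma polMat_nonneg (γ : ℝ) (hγ0 : 0 ≤ γ) (P : S → A → S → ℝ)
    (hP0 : ∀ s a s', 0 ≤ P s a s') (π : S → A) (p q : S × A) :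
    0 ≤ polMat γ P π p q := by
  unfold polMat
  dsimp
  split
  · exact mul_nonneg hγ0 (hP0 _ _ _)
  · exact le_refl 0

lemma polMat_rowsum (γ : ℝ) (P : S → A → S → ℝ)
    (hP1 : ∀ s a, ∑ s' : S, P s a s' = 1) (π : S → A) (p : S × A) :
    ∑ q : S × A, polMat γ P π p q = γ := by
  unfold polMat
  rw [Fintype.sum_prod_type]
  simp only [Matrix.of_apply]
  calc ∑ s' : S, ∑ a' : A, (if a' = π s' then γ * P p.1 p.2 s' else 0)
      = ∑ s' : S, γ * P p.1 p.2 s' := by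
        refine Finset.sum_congr rfl fun s' _ => ?_
        rw [Finset.sum_ite_eq' Finset.univ (π s') (fun _ => γ * P p.1 p.2 s')]
        simp
    _ = γ := by rw [← Finset.mul_sum, hP1, mul_one]

lemma polMat_pow_nonneg (γ : ℝ) (hγ0 : 0 ≤ γ) (P : S → A → S → ℝ)
    (hP0 : ∀ s a s', 0 ≤ P s a s') (π : S → A) (i : ℕ) (p q : S × A) :
    0 ≤ (polMat γ P π ^ i) p q := by
  induction i generalizing p q with
  | zero => simp [Matrix.one_apply]; positivity
  | succ n ih =>
    rw [pow_succ, Matrix.mul_apply]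
    exact Finset.sum_nonneg fun r _ => mul_nonneg (ih p r) (polMat_nonneg γ hγ0 P hP0 π r q)

lemma polMat_pow_rowsum (γ : ℝ) (P : S → A → S → ℝ)
    (hP1 : ∀ s a, ∑ s' : S, P s a s' = 1) (π : S → A) (i : ℕ) (p : S × A) :
    ∑ q : S × A, (polMat γ P π ^ i) p q = γ ^ i := by
  induction i generalizing p with
  | zero => simp [Matrix.one_apply]
  | succ n ih =>
    rw [pow_succ']
    simp only [Matrix.mul_apply]
    rw [Finset.sum_comm]
    calc ∑ r : S × A, ∑ q : S × A, polMat γ P π p r * (polMat γ P π ^ n) r q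
        = ∑ r : S × A, polMat γ P π p r * γ ^ n := by
          refine Finset.sum_congr rfl fun r _ => ?_
          rw [← Finset.mul_sum, ih]
      _ = γ * γ ^ n := by rw [← Finset.sum_mul, polMat_rowsum γ P hP1]
      _ = γ ^ (n + 1) := by ring

lemma polMat_pow_le (γ : ℝ) (hγ0 : 0 ≤ γ) (P : S → A → S → ℝ)
    (hP0 : ∀ s a s', 0 ≤ P s a s')
    (hP1 : ∀ s a, ∑ s' : S, P s a s' = 1) (π : S → A) (i : ℕ) (p q : S × A) :
    (polMat γ P π ^ i) p q ≤ γ ^ i := by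
  rw [← polMat_pow_rowsum γ P hP1 π i p]
  exact Finset.single_le_sum (fun r _ => polMat_pow_nonneg γ hγ0 P hP0 π i p r)
    (Finset.mem_univ q)

end aux

/-- linear Lyapunov inequality on the shifted orthant: if `F Q* = Q*`, `π*`
is greedy w.r.t. `Q*`, `γ + ε < 1`, `w > 0` entrywise, and
`v = Σ_i (γ+ε)^{−i} (A_{π*}ᵀ)ⁱ w`, then `Q ≤ Q*` implies
`(γ+ε) vᵀ(Q − Q*) ≤ vᵀ(F Q − Q*) ≤ 0`. -/
theorem stmt16 {S A : Type*} [Fintype S] [Fintype A] [Nonempty S] [Nonempty A]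
    [DecidableEq S] [DecidableEq A]
    (γ ε : ℝ) (hγ0 : 0 ≤ γ) (hγ1 : γ < 1) (hε : 0 < ε) (hγε : γ + ε < 1)
    (P : S → A → S → ℝ) (hP0 : ∀ s a s', 0 ≤ P s a s')
    (hP1 : ∀ s a, ∑ s' : S, P s a s' = 1)
    (R : S → A → ℝ)
    (Qstar : S × A → ℝ) (hfix : bellman γ P R Qstar = Qstar)
    (πstar : S → A)
    (hgreedy : ∀ s : S,
      Qstar (s, πstar s) = Finset.univ.sup' Finset.univ_nonempty (fun a => Qstar (s, a)))
    (w : S × A → ℝ) (hw : ∀ p, 0 < w p)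
    (v : S × A → ℝ)
    (hv : v = ∑' i : ℕ, ((γ + ε)⁻¹ ^ i) • ((polMat γ P πstar)ᵀ ^ i).mulVec w) :
    ∀ Q : S × A → ℝ, Q ≤ Qstar →
      (γ + ε) * (v ⬝ᵥ (Q - Qstar)) ≤ v ⬝ᵥ (bellman γ P R Q - Qstar) ∧
        v ⬝ᵥ (bellman γ P R Q - Qstar) ≤ 0 := by
  have hβ0 : (0:ℝ) < γ + ε := by linarith
  have hγβ : γ < γ + ε := by linarith
  set β := γ + ε with hβ
  set M := polMat γ P πstar with hM
  set g : ℕ → S × A → ℝ := fun i => (β⁻¹ ^ i) • ((Mᵀ ^ i).mulVec w) with hg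
  set W : ℝ := ∑ q : S × A, w q with hW
  have hgapp : ∀ i p, g i p = β⁻¹ ^ i * ∑ q : S × A, (M ^ i) q p * w q := by
    intro i p
    simp only [hg, Pi.smul_apply, smul_eq_mul, ← Matrix.transpose_pow,
      Matrix.mulVec, dotProduct, Matrix.transpose_apply]
  have hg_nonneg : ∀ i p, 0 ≤ g i p := by
    intro i p
    rw [hgapp]
    refine mul_nonneg (by positivity) (Finset.sum_nonneg fun q _ => ?_)
    exact mul_nonneg (polMat_pow_nonneg γ hγ0 P hP0 πstar i q p) (hw q).le
  have hg_le : ∀ i p, g i p ≤ (γ / β) ^ i * W := by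
    intro i p
    rw [hgapp]
    have h1 : ∑ q : S × A, (M ^ i) q p * w q ≤ ∑ q : S × A, γ ^ i * w q := by
      refine Finset.sum_le_sum fun q _ => ?_
      exact mul_le_mul_of_nonneg_right (polMat_pow_le γ hγ0 P hP0 hP1 πstar i q p) (hw q).le
    calc β⁻¹ ^ i * ∑ q : S × A, (M ^ i) q p * w q
        ≤ β⁻¹ ^ i * ∑ q : S × A, γ ^ i * w q := by
          exact mul_le_mul_of_nonneg_left h1 (by positivity)
      _ = (γ / β) ^ i * W := by
          rw [← Finset.mul_sum, div_pow, div_eq_mul_inv, ← hW]; ring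
  have hsum' : ∀ p, Summable fun i => g i p := by
    intro p
    refine Summable.of_nonneg_of_le (fun i => hg_nonneg i p) (fun i => hg_le i p) ?_
    exact (summable_geometric_of_lt_one (by positivity)
      ((div_lt_one hβ0).mpr hγβ)).mul_right W
  have hsum : Summable g := Pi.summable.mpr hsum'
  have hvapp : ∀ p, v p = ∑' i, g i p := by
    intro p
    rw [hv]
    exact tsum_apply hsum
  have hg0 : ∀ p, g 0 p = w p := by
    intro p; simp [hg]
  have hv_pos : ∀ p, 0 < v p := by
    intro p
    rw [hvapp p]
    have := Summable.le_tsum (hsum' p) 0 (fun j _ => hg_nonneg j p)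
    rw [hg0 p] at this
    exact lt_of_lt_of_le (hw p) this
  have hβne : β ≠ 0 := hβ0.ne'
  have key : ∀ p, Mᵀ.mulVec v p = β * (v p - w p) := by
    intro p
    have h1 : Mᵀ.mulVec v p = ∑ q : S × A, Mᵀ p q * v q := rfl
    rw [h1]
    calc ∑ q : S × A, Mᵀ p q * v q
        = ∑ q : S × A, ∑' i, Mᵀ p q * g i q := by
          refine Finset.sum_congr rfl fun q _ => ?_
          rw [hvapp q, tsum_mul_left]
      _ = ∑' i, ∑ q : S × A, Mᵀ p q * g i q :=
          (Summable.tsum_finsetSum fun q _ => (hsum' q).mul_left _).symm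
      _ = ∑' i, β⁻¹ ^ i * ((Mᵀ ^ (i+1)).mulVec w) p := by
          refine tsum_congr fun i => ?_
          have : ∑ q : S × A, Mᵀ p q * g i q = Mᵀ.mulVec (g i) p := rfl
          rw [this]
          simp only [hg, Matrix.mulVec_smul, Matrix.mulVec_mulVec, ← pow_succ']
          rfl
      _ = β * ∑' i, β⁻¹ ^ (i+1) * ((Mᵀ ^ (i+1)).mulVec w) p := by
          rw [← tsum_mul_left]
          refine tsum_congr fun i => ?_
          rw [pow_succ']
          rw [pow_succ' β⁻¹]
          simp only [← mul_assoc, mul_inv_cancel₀ hβne, one_mul]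
      _ = β * ∑' i, g (i+1) p := by
          refine congrArg (β * ·) (tsum_congr fun i => ?_)
          simp [hg]
      _ = β * (v p - w p) := by
          have h2 := Summable.tsum_eq_zero_add (hsum' p)
          rw [hg0 p] at h2
          rw [hvapp p, h2]
          ring
  have hMTv_le : ∀ p, Mᵀ.mulVec v p ≤ β * v p := by
    intro p
    rw [key p]
    nlinarith [hw p, hβ0]
  intro Q hQ
  have hQ' : ∀ p, Q p ≤ Qstar p := fun p => hQ p
  -- pointwise upper bound: bellman Q ≤ bellman Qstar
  have hbell_le : ∀ p : S × A, bellman γ P R Q p ≤ bellman γ P R Qstar p := by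
    intro p
    unfold bellman
    refine add_le_add le_rfl (mul_le_mul_of_nonneg_left (Finset.sum_le_sum fun s' _ => ?_) hγ0)
    exact mul_le_mul_of_nonneg_left
      (Finset.sup'_mono_fun fun a _ => hQ' (s', a)) (hP0 _ _ _)
  -- pointwise lower bound: A_π (Q - Q*) ≤ F Q - Q*
  have hclaimB : ∀ p : S × A,
      M.mulVec (Q - Qstar) p ≤ bellman γ P R Q p - Qstar p := by
    intro p
    have hQs : ∀ p', Qstar p' = bellman γ P R Qstar p' := fun p' => (congrFun hfix p').symm
    rw [hQs p]
    have hL : M.mulVec (Q - Qstar) p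
        = ∑ s' : S, γ * P p.1 p.2 s' * (Q (s', πstar s') - Qstar (s', πstar s')) := by
      show ∑ q : S × A, M p q * (Q q - Qstar q) = _
      rw [Fintype.sum_prod_type]
      refine Finset.sum_congr rfl fun s' _ => ?_
      have : ∀ a' : A, M p (s', a') * (Q (s', a') - Qstar (s', a'))
          = if a' = πstar s' then γ * P p.1 p.2 s' * (Q (s', a') - Qstar (s', a')) else 0 := by
        intro a'
        simp only [hM, polMat, Matrix.of_apply]
        split <;> simp
      simp only [this]
      rw [Finset.sum_ite_eq' Finset.univ (πstar s')
        (fun a' => γ * P p.1 p.2 s' * (Q (s', a') - Qstar (s', a')))]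
      simp
    have hR : bellman γ P R Q p - bellman γ P R Qstar p
        = ∑ s' : S, γ * P p.1 p.2 s' *
            ((Finset.univ.sup' Finset.univ_nonempty fun a' => Q (s', a')) -
             (Finset.univ.sup' Finset.univ_nonempty fun a' => Qstar (s', a'))) := by
      unfold bellman
      have habc : ∀ X Y : ℝ, (R p.1 p.2 + γ * X) - (R p.1 p.2 + γ * Y) = γ * (X - Y) := by
        intro X Y; ring
      rw [habc, ← Finset.sum_sub_distrib, Finset.mul_sum]
      refine Finset.sum_congr rfl fun s' _ => ?_
      ring
    rw [hL, hR]
    refine Finset.sum_le_sum fun s' _ => ?_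
    refine mul_le_mul_of_nonneg_left ?_ (mul_nonneg hγ0 (hP0 _ _ _))
    have h1 : Q (s', πstar s') ≤ Finset.univ.sup' Finset.univ_nonempty fun a' => Q (s', a') :=
      Finset.le_sup' (fun a' => Q (s', a')) (Finset.mem_univ (πstar s'))
    have h2 : Qstar (s', πstar s')
        = Finset.univ.sup' Finset.univ_nonempty fun a' => Qstar (s', a') := hgreedy s'
    linarith
  have hFQ_le : ∀ p : S × A, (bellman γ P R Q - Qstar) p ≤ 0 := by
    intro p
    have := hbell_le p
    rw [hfix] at this
    simpa using this
  constructor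
  · -- first inequality
    have step1 : v ⬝ᵥ M.mulVec (Q - Qstar) ≤ v ⬝ᵥ (bellman γ P R Q - Qstar) := by
      refine Finset.sum_le_sum fun p _ => ?_
      exact mul_le_mul_of_nonneg_left (hclaimB p) (hv_pos p).le
    have step2 : β * (v ⬝ᵥ (Q - Qstar)) ≤ v ⬝ᵥ M.mulVec (Q - Qstar) := by
      rw [Matrix.dotProduct_mulVec, ← Matrix.mulVec_transpose]
      have : β * (v ⬝ᵥ (Q - Qstar)) = ∑ p : S × A, (β * v p) * (Q p - Qstar p) := by
        rw [dotProduct, Finset.mul_sum]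
        exact Finset.sum_congr rfl fun p _ => by simp [Pi.sub_apply]; ring
      rw [this]
      refine Finset.sum_le_sum fun p _ => ?_
      have hd : Q p - Qstar p ≤ 0 := by linarith [hQ' p]
      have := mul_le_mul_of_nonpos_right (hMTv_le p) hd
      simpa [Pi.sub_apply] using this
    exact le_trans step2 step1
  · refine Finset.sum_nonpos fun p _ => ?_
    exact mul_nonpos_of_nonneg_of_nonpos (hv_pos p).le (hFQ_le p)
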